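/- With the hypotheses above, if q is a nonzero multiplicative quadratic form on (A,·), then s := q(b·a) is nonzero, and s·q(x*y) = q(x)q(y) holds for all x, y ∈ A; hence s⁻¹q is a nonzero multiplicative quadratic form on (A,*). -/

import Mathlib

/-- With the isotope multiplication `x * y = ρ_a⁻¹ x · λ_b⁻¹ y`, if `q` is a
nonzero multiplicative quadratic form on `(A,·)`, then `s := q(b·a)` is nonzero and
`s * q(x*y) = q x * q y` for all `x, y`; hence `s⁻¹ • q` is a nonzero multiplicative
quadratic form for `*`. -/
theorem stmt_1 (F : Type*) [Field F] (A : Type*) [AddCommGroup A] [Module F A]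
    (mul : A →ₗ[F] A →ₗ[F] A)
    (q : QuadraticForm F A)
    (hq : ∀ x y : A, q (mul x y) = q x * q y)
    (hq0 : q ≠ 0)
    (a b : A)
    (ha : Function.Bijective (fun x => mul x a))
    (hb : Function.Bijective (fun x => mul b x)) :
    q (mul b a) ≠ 0 ∧
    (∀ x y : A,
      q (mul b a) *
        q (mul (Function.invFun (fun z => mul z a) x)
            (Function.invFun (fun z => mul b z) y)) = q x * q y) ∧
    (q (mul b a))⁻¹ • q ≠ 0 ∧
    (∀ x y : A,
      ((q (mul b a))⁻¹ • q)
          (mul (Function.invFun (fun z => mul z a) x)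
            (Function.invFun (fun z => mul b z) y)) =
        ((q (mul b a))⁻¹ • q) x * ((q (mul b a))⁻¹ • q) y) := by
  obtain ⟨w, hw⟩ : ∃ w, q w ≠ 0 := by
    by_contra h
    push_neg at h
    exact hq0 (QuadraticMap.ext h)
  have hqa : q a ≠ 0 := by
    intro h0
    obtain ⟨u, hu⟩ := ha.surjective w
    apply hw
    rw [← hu, hq, h0, mul_zero]
  have hqb : q b ≠ 0 := by
    intro h0
    obtain ⟨u, hu⟩ := hb.surjective w
    apply hw
    rw [← hu, hq, h0, zero_mul]
  have hs : q (mul b a) ≠ 0 := by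
    rw [hq]; exact mul_ne_zero hqb hqa
  have key : ∀ x y : A,
      q (mul b a) *
        q (mul (Function.invFun (fun z => mul z a) x)
            (Function.invFun (fun z => mul b z) y)) = q x * q y := by
    intro x y
    have hx : mul (Function.invFun (fun z => mul z a) x) a = x :=
      Function.rightInverse_invFun ha.surjective x
    have hy : mul b (Function.invFun (fun z => mul b z) y) = y :=
      Function.rightInverse_invFun hb.surjective y
    calc q (mul b a) * q (mul (Function.invFun (fun z => mul z a) x)
              (Function.invFun (fun z => mul b z) y))
        = (q b * q a) * (q (Function.invFun (fun z => mul z a) x) *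
            q (Function.invFun (fun z => mul b z) y)) := by rw [hq, hq]
      _ = (q (Function.invFun (fun z => mul z a) x) * q a) *
            (q b * q (Function.invFun (fun z => mul b z) y)) := by ring
      _ = q x * q y := by rw [← hq, ← hq, hx, hy]
  refine ⟨hs, key, ?_, ?_⟩
  · intro h
    apply hw
    have := DFunLike.congr_fun h w
    simp only [QuadraticMap.zero_apply, QuadraticMap.smul_apply, smul_eq_mul] at this
    rcases mul_eq_zero.mp this with h1 | h2
    · exact absurd h1 (inv_ne_zero hs)
    · exact h2
  · intro x y
    have := key x y
    simp only [QuadraticMap.smul_apply, smul_eq_mul]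
    field_simp
    linear_combination this
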